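/- Lindeberg swapping tail estimate: let (λ(M))_{M∈ℕ} be nonnegative reals with sup_{M>K} λ(M) ≤ 1/√K and ∑_{M>K} λ(M)² ≤ 1, and let W be a random variable with E[W] = 0, E[W²] = 1, E[W⁴] < ∞. Then for every ε > 0 there is a constant C (depending only on E[W⁴] and ε) such that ∑_{M>K} ( E[λ(M)²W² · 1{λ(M)²W² > ε}] + E[|λ(M)W|³] ) ≤ C/√K. -/

import Mathlib

open MeasureTheory

/-- Lindeberg-swapping tail estimate: if `W` has mean `0`, variance `1` and finite fourth
moment, then for every `ε > 0` there is a constant `C > 0` such that for all `K ≥ 1` and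
all nonnegative weights `λ` with `λ(M) ≤ 1/√K` for `M > K` and `∑_{M>K} λ(M)² ≤ 1`,
`∑_{M>K} ( E[λ(M)²W² 1{λ(M)²W² > ε}] + E[|λ(M)W|³] ) ≤ C/√K`. -/
theorem stmt19 {Ω : Type*} [MeasurableSpace Ω] (P : Measure Ω) [IsProbabilityMeasure P]
    (W : Ω → ℝ) (hWmeas : Measurable W)
    (hW4 : Integrable (fun a => (W a) ^ 4) P)
    (hWmean : ∫ a, W a ∂P = 0) (hWvar : ∫ a, (W a) ^ 2 ∂P = 1) :
    ∀ ε : ℝ, 0 < ε → ∃ C > (0 : ℝ), ∀ K : ℕ, 1 ≤ K → ∀ l : ℕ → ℝ,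
      (∀ M, 0 ≤ l M) →
      (∀ M : ℕ, K < M → l M ≤ 1 / Real.sqrt K) →
      (∑' M : ℕ, (if K < M then (l M) ^ 2 else 0)) ≤ 1 →
      Summable (fun M : ℕ => if K < M then (l M) ^ 2 else 0) →
      (∑' M : ℕ, if K < M then
          ((∫ a, Set.indicator {a | ε < (l M) ^ 2 * (W a) ^ 2}
              (fun a => (l M) ^ 2 * (W a) ^ 2) a ∂P)
            + ∫ a, |l M * W a| ^ 3 ∂P)
        else 0)
        ≤ C / Real.sqrt K := by
  intro ε hε
  have hE4 : (0:ℝ) ≤ ∫ a, (W a) ^ 4 ∂P := integral_nonneg fun a => by positivity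
  set E4 : ℝ := ∫ a, (W a) ^ 4 ∂P with hE4def
  refine ⟨E4 / ε + (1 + E4), by positivity, ?_⟩
  intro K hK l hl0 hlK hsum hsumm
  set C : ℝ := E4 / ε + (1 + E4) with hCdef
  have hKpos : (0:ℝ) < (K:ℝ) := by exact_mod_cast Nat.lt_of_lt_of_le Nat.zero_lt_one hK
  have hsK : (0:ℝ) < Real.sqrt K := Real.sqrt_pos.mpr hKpos
  have hsq : Real.sqrt K * Real.sqrt K = (K:ℝ) := Real.mul_self_sqrt hKpos.le
  have hK1 : (1:ℝ) ≤ Real.sqrt K := by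
    rw [show (1:ℝ) = Real.sqrt 1 by simp]
    exact Real.sqrt_le_sqrt (by exact_mod_cast hK)
  -- key per-term bound
  have key : ∀ M : ℕ, K < M →
      ((∫ a, Set.indicator {a | ε < (l M) ^ 2 * (W a) ^ 2}
          (fun a => (l M) ^ 2 * (W a) ^ 2) a ∂P)
        + ∫ a, |l M * W a| ^ 3 ∂P) ≤ (l M) ^ 2 * (C / Real.sqrt K) := by
    intro M hM
    have hlM : l M ≤ 1 / Real.sqrt K := hlK M hM
    have hl0M : 0 ≤ l M := hl0 M
    have hl2 : (l M) ^ 2 ≤ 1 / Real.sqrt K := by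
      have h1 : (l M) ^ 2 ≤ (1 / Real.sqrt K) ^ 2 := by
        apply pow_le_pow_left₀ hl0M hlM
      have h2 : (1 / Real.sqrt K) ^ 2 ≤ 1 / Real.sqrt K := by
        rw [div_pow, one_pow, sq, hsq]
        apply div_le_div_of_nonneg_left one_pos.le hsK
        nlinarith
      linarith
    -- first integral bound
    have hind : (∫ a, Set.indicator {a | ε < (l M) ^ 2 * (W a) ^ 2}
        (fun a => (l M) ^ 2 * (W a) ^ 2) a ∂P)
        ≤ (l M) ^ 4 / ε * E4 := by
      have hgint : Integrable (fun a => (l M) ^ 4 / ε * (W a) ^ 4) P := hW4.const_mul _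
      have hmono : (∫ a, Set.indicator {a | ε < (l M) ^ 2 * (W a) ^ 2}
          (fun a => (l M) ^ 2 * (W a) ^ 2) a ∂P)
          ≤ ∫ a, (l M) ^ 4 / ε * (W a) ^ 4 ∂P := by
        apply integral_mono_of_nonneg
        · filter_upwards with a
          exact Set.indicator_nonneg (fun a _ => by positivity) a
        · exact hgint
        · filter_upwards with a
          by_cases h : a ∈ {a | ε < (l M) ^ 2 * (W a) ^ 2}
          · rw [Set.indicator_of_mem h]
            have hh : ε < (l M) ^ 2 * (W a) ^ 2 := h
            rw [div_mul_eq_mul_div, ← sub_nonneg]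
            have : (l M) ^ 4 * (W a) ^ 4 / ε - (l M) ^ 2 * (W a) ^ 2
                = (((l M) ^ 2 * (W a) ^ 2) * (((l M) ^ 2 * (W a) ^ 2) - ε)) / ε := by
              field_simp
            rw [this]
            apply div_nonneg _ hε.le
            apply mul_nonneg (by positivity)
            linarith
          · rw [Set.indicator_of_notMem h]
            positivity
      calc _ ≤ ∫ a, (l M) ^ 4 / ε * (W a) ^ 4 ∂P := hmono
        _ = (l M) ^ 4 / ε * E4 := by rw [integral_const_mul]
    -- second integral bound
    have habs : (∫ a, |l M * W a| ^ 3 ∂P) ≤ (l M) ^ 3 * (1 + E4) := by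
      have hgint : Integrable (fun a => (l M) ^ 3 * (1 + (W a) ^ 4)) P :=
        ((integrable_const (1:ℝ)).add hW4).const_mul _
      have hmono : (∫ a, |l M * W a| ^ 3 ∂P)
          ≤ ∫ a, (l M) ^ 3 * (1 + (W a) ^ 4) ∂P := by
        apply integral_mono_of_nonneg
        · filter_upwards with a; positivity
        · exact hgint
        · filter_upwards with a
          have h1 : |l M * W a| ^ 3 = (l M) ^ 3 * |W a| ^ 3 := by
            rw [abs_mul, mul_pow, abs_of_nonneg hl0M]
          rw [h1]
          apply mul_le_mul_of_nonneg_left _ (by positivity)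
          have ht : (0:ℝ) ≤ |W a| := abs_nonneg _
          have ht4 : |W a| ^ 4 = (W a) ^ 4 := by
            rw [← abs_pow, abs_of_nonneg (by positivity)]
          nlinarith [sq_nonneg (|W a| ^ 2 - |W a|), sq_nonneg (|W a| - 1), sq_nonneg (|W a|)]
      calc _ ≤ ∫ a, (l M) ^ 3 * (1 + (W a) ^ 4) ∂P := hmono
        _ = (l M) ^ 3 * (1 + E4) := by
            rw [integral_const_mul, integral_add (integrable_const _) hW4]
            simp [hE4def]
    have hl4 : (l M) ^ 4 ≤ (l M) ^ 2 * (1 / Real.sqrt K) := by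
      calc (l M) ^ 4 = (l M) ^ 2 * (l M) ^ 2 := by ring
        _ ≤ (l M) ^ 2 * (1 / Real.sqrt K) := by
            apply mul_le_mul_of_nonneg_left hl2 (by positivity)
    have hl3 : (l M) ^ 3 ≤ (l M) ^ 2 * (1 / Real.sqrt K) := by
      calc (l M) ^ 3 = (l M) ^ 2 * (l M) := by ring
        _ ≤ (l M) ^ 2 * (1 / Real.sqrt K) := by
            apply mul_le_mul_of_nonneg_left hlM (by positivity)
    have hεE : 0 ≤ E4 / ε := by positivity
    have h1E : (0:ℝ) ≤ 1 + E4 := by linarith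
    calc _ ≤ (l M) ^ 4 / ε * E4 + (l M) ^ 3 * (1 + E4) := add_le_add hind habs
      _ ≤ ((l M) ^ 2 * (1 / Real.sqrt K)) / ε * E4
          + ((l M) ^ 2 * (1 / Real.sqrt K)) * (1 + E4) := by
            apply add_le_add
            · apply mul_le_mul_of_nonneg_right _ hE4
              exact div_le_div_of_nonneg_right hl4 hε.le
            · exact mul_le_mul_of_nonneg_right hl3 h1E
      _ = (l M) ^ 2 * (C / Real.sqrt K) := by rw [hCdef]; field_simp
  -- sum up
  set f : ℕ → ℝ := fun M => if K < M then
      ((∫ a, Set.indicator {a | ε < (l M) ^ 2 * (W a) ^ 2}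
          (fun a => (l M) ^ 2 * (W a) ^ 2) a ∂P)
        + ∫ a, |l M * W a| ^ 3 ∂P) else 0 with hfdef
  set g : ℕ → ℝ := fun M => (if K < M then (l M) ^ 2 else 0) * (C / Real.sqrt K) with hgdef
  have hfg : ∀ M, f M ≤ g M := by
    intro M
    simp only [hfdef, hgdef]
    by_cases h : K < M
    · simp only [if_pos h]; exact key M h
    · simp [if_neg h]
  have hf0 : ∀ M, 0 ≤ f M := by
    intro M
    simp only [hfdef]
    by_cases h : K < M
    · simp only [if_pos h]
      apply add_nonneg
      · apply integral_nonneg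
        intro a
        exact Set.indicator_nonneg (fun a _ => by positivity) a
      · exact integral_nonneg fun a => by positivity
    · simp [if_neg h]
  have hgsumm : Summable g := hsumm.mul_right _
  have hfsumm : Summable f := Summable.of_nonneg_of_le hf0 hfg hgsumm
  calc (∑' M, f M) ≤ ∑' M, g M := Summable.tsum_le_tsum hfg hfsumm hgsumm
    _ = (∑' M, if K < M then (l M) ^ 2 else 0) * (C / Real.sqrt K) := tsum_mul_right
    _ ≤ 1 * (C / Real.sqrt K) := by
        apply mul_le_mul_of_nonneg_right hsum (by positivity)
    _ = C / Real.sqrt K := one_mul _
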